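/- Let (𝒳, ℬ, P) be a probability space and T measure-preserving, A ∈ ℬ, and 𝒲_{s,ℓ}(A) as before. Then for all natural numbers s, t, m: |P(𝒲_{0,s}(A) ∩ 𝒲_{s+t,m}(A)) − P(𝒲_{0,m}(A))(1 − s·P(A))| ≤ |s·P(A)·P(𝒲_{0,m}(A)) − ∑_{j=0}^{s-1} P(A ∩ 𝒲_{s+t-j,m}(A))| + 2s · ∑_{j=1}^{s-1} P(A ∩ T^{-j}(A)). -/

import Mathlib

open MeasureTheory

def avoidWindow {X : Type*} (T : X → X) (s ℓ : ℕ) (A : Set X) : Set X :=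
  ⋂ i ∈ Finset.Ico s (s + ℓ), T^[i] ⁻¹' Aᶜ

lemma mem_avoidWindow_iff {X : Type*} (T : X → X) (s ℓ : ℕ) (A : Set X) (x : X) :
    x ∈ avoidWindow T s ℓ A ↔ ∀ i < ℓ, T^[s + i] x ∉ A := by
  simp only [avoidWindow, Set.mem_iInter, Finset.mem_Ico, Set.mem_preimage, Set.mem_compl_iff]
  constructor
  · intro h i hi; exact h (s + i) ⟨Nat.le_add_right _ _, by omega⟩
  · rintro h i ⟨h1, h2⟩
    have := h (i - s) (by omega)
    rwa [Nat.add_sub_cancel' h1] at this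

lemma measurableSet_avoidWindow {X : Type*} [MeasurableSpace X] {T : X → X}
    (hT : Measurable T) {A : Set X} (hA : MeasurableSet A) (s ℓ : ℕ) :
    MeasurableSet (avoidWindow T s ℓ A) :=
  MeasurableSet.biInter (Finset.Ico s (s + ℓ)).countable_toSet
    (fun i _ => (hT.iterate i) hA.compl)

lemma preimage_avoidWindow {X : Type*} (T : X → X) (j r ℓ : ℕ) (A : Set X) :
    T^[j] ⁻¹' avoidWindow T r ℓ A = avoidWindow T (r + j) ℓ A := by
  ext x
  simp only [Set.mem_preimage, mem_avoidWindow_iff]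
  constructor <;> intro h i hi
  · have := h i hi
    rwa [← Function.iterate_add_apply, show r + i + j = r + j + i by omega] at this
  · have := h i hi
    rwa [← Function.iterate_add_apply, show r + i + j = r + j + i by omega]

lemma avoidWindow_zero_eq {X : Type*} (T : X → X) (s : ℕ) (A : Set X) :
    avoidWindow T 0 s A = (⋃ j ∈ Finset.range s, T^[j] ⁻¹' A)ᶜ := by
  ext x
  simp [mem_avoidWindow_iff]

lemma bonferroni_lower {X : Type*} [MeasurableSpace X] (μ : Measure X) [IsFiniteMeasure μ]
    (C : ℕ → Set X) (hC : ∀ j, MeasurableSet (C j)) (s : ℕ) :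
    ∑ j ∈ Finset.range s, (μ (C j)).toReal
      - ∑ j ∈ Finset.range s, ∑ k ∈ Finset.range j, (μ (C j ∩ C k)).toReal
      ≤ (μ (⋃ j ∈ Finset.range s, C j)).toReal := by
  induction s with
  | zero => simp
  | succ n ih =>
    rw [Finset.sum_range_succ, Finset.sum_range_succ]
    have hUeq : (⋃ j ∈ Finset.range (n + 1), C j) = (⋃ j ∈ Finset.range n, C j) ∪ C n := by
      rw [Finset.range_add_one, Finset.set_biUnion_insert, Set.union_comm]
    set U := ⋃ j ∈ Finset.range n, C j with hU
    have hUm : MeasurableSet U := by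
      exact MeasurableSet.biUnion (Finset.range n).countable_toSet (fun j _ => hC j)
    have hadd : μ (U ∪ C n) + μ (U ∩ C n) = μ U + μ (C n) := measure_union_add_inter U (hC n)
    have h1 : (μ (U ∪ C n)).toReal + (μ (U ∩ C n)).toReal
        = (μ U).toReal + (μ (C n)).toReal := by
      rw [← ENNReal.toReal_add (measure_ne_top _ _) (measure_ne_top _ _),
        ← ENNReal.toReal_add (measure_ne_top _ _) (measure_ne_top _ _), hadd]
    have h2 : (μ (U ∩ C n)).toReal ≤ ∑ k ∈ Finset.range n, (μ (C n ∩ C k)).toReal := by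
      have hsub : U ∩ C n = ⋃ k ∈ Finset.range n, (C n ∩ C k) := by
        rw [hU]; ext x; simp [Set.mem_iUnion]; tauto
      rw [hsub]
      calc (μ (⋃ k ∈ Finset.range n, C n ∩ C k)).toReal
          ≤ (∑ k ∈ Finset.range n, μ (C n ∩ C k)).toReal := by
            apply ENNReal.toReal_mono
            · exact (ENNReal.sum_lt_top.2 fun k _ => measure_lt_top _ _).ne
            · exact measure_biUnion_finset_le _ _
        _ = ∑ k ∈ Finset.range n, (μ (C n ∩ C k)).toReal :=
            ENNReal.toReal_sum (fun k _ => measure_ne_top _ _)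
    rw [hUeq]
    linarith

lemma bonferroni_upper {X : Type*} [MeasurableSpace X] (μ : Measure X) [IsFiniteMeasure μ]
    (C : ℕ → Set X) (s : ℕ) :
    (μ (⋃ j ∈ Finset.range s, C j)).toReal ≤ ∑ j ∈ Finset.range s, (μ (C j)).toReal := by
  calc (μ (⋃ j ∈ Finset.range s, C j)).toReal
      ≤ (∑ j ∈ Finset.range s, μ (C j)).toReal := by
        apply ENNReal.toReal_mono
        · exact (ENNReal.sum_lt_top.2 fun k _ => measure_lt_top _ _).ne
        · exact measure_biUnion_finset_le _ _
    _ = ∑ j ∈ Finset.range s, (μ (C j)).toReal :=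
        ENNReal.toReal_sum (fun k _ => measure_ne_top _ _)

theorem inductive_step_estimate {X : Type*} [MeasurableSpace X] (μ : Measure X)
    [IsProbabilityMeasure μ] (T : X → X) (hT : MeasurePreserving T μ μ)
    (A : Set X) (hA : MeasurableSet A) (s t m : ℕ) :
    |(μ (avoidWindow T 0 s A ∩ avoidWindow T (s + t) m A)).toReal -
        (μ (avoidWindow T 0 m A)).toReal * (1 - (s : ℝ) * (μ A).toReal)| ≤
      |(s : ℝ) * (μ A).toReal * (μ (avoidWindow T 0 m A)).toReal -
          ∑ j ∈ Finset.range s, (μ (A ∩ avoidWindow T (s + t - j) m A)).toReal| +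
        2 * (s : ℝ) * ∑ j ∈ Finset.Ico 1 s, (μ (A ∩ T^[j] ⁻¹' A)).toReal := by
  have hTm := hT.measurable
  set W := avoidWindow T (s + t) m A with hWdef
  set W0 := avoidWindow T 0 m A with hW0def
  set C : ℕ → Set X := fun j => T^[j] ⁻¹' A ∩ W with hCdef
  have hWm : MeasurableSet W := measurableSet_avoidWindow hTm hA _ _
  have hW0m : MeasurableSet W0 := measurableSet_avoidWindow hTm hA _ _
  have hCm : ∀ j, MeasurableSet (C j) := fun j => ((hTm.iterate j) hA).inter hWm
  -- μ W = μ W0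
  have hWW0 : μ W = μ W0 := by
    rw [hWdef, hW0def, show s + t = 0 + (s + t) by omega, ← preimage_avoidWindow,
      (hT.iterate (s + t)).measure_preimage (measurableSet_avoidWindow hTm hA 0 m).nullMeasurableSet]
  -- μ (C j) = μ (A ∩ avoidWindow T (s+t-j) m A) for j < s
  have hCj : ∀ j ∈ Finset.range s, (μ (C j)).toReal = (μ (A ∩ avoidWindow T (s + t - j) m A)).toReal := by
    intro j hj
    rw [Finset.mem_range] at hj
    have hCeq : C j = T^[j] ⁻¹' (A ∩ avoidWindow T (s + t - j) m A) := by
      rw [hCdef, Set.preimage_inter, preimage_avoidWindow, show s + t - j + j = s + t by omega, hWdef]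
    rw [hCeq, (hT.iterate j).measure_preimage
      (hA.inter (measurableSet_avoidWindow hTm hA _ _)).nullMeasurableSet]
  -- pairwise bound
  have hpair : ∀ j ∈ Finset.range s, ∀ k ∈ Finset.range j,
      (μ (C j ∩ C k)).toReal ≤ (μ (A ∩ T^[j - k] ⁻¹' A)).toReal := by
    intro j hj k hk
    rw [Finset.mem_range] at hj hk
    have hsub : C j ∩ C k ⊆ T^[k] ⁻¹' (T^[j - k] ⁻¹' A ∩ A) := by
      intro x hx
      obtain ⟨⟨hx1, _⟩, ⟨hx2, _⟩⟩ := hx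
      refine ⟨?_, hx2⟩
      simp only [Set.mem_preimage] at *
      rwa [← Function.iterate_add_apply, Nat.sub_add_cancel hk.le]
    calc (μ (C j ∩ C k)).toReal ≤ (μ (T^[k] ⁻¹' (T^[j - k] ⁻¹' A ∩ A))).toReal := by
          apply ENNReal.toReal_mono (measure_ne_top _ _) (measure_mono hsub)
      _ = (μ (A ∩ T^[j - k] ⁻¹' A)).toReal := by
          rw [(hT.iterate k).measure_preimage (((hTm.iterate (j - k)) hA).inter hA).nullMeasurableSet,
            Set.inter_comm]
  -- split
  have hsplit : (μ (avoidWindow T 0 s A ∩ W)).toReal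
      = (μ W0).toReal - (μ (⋃ j ∈ Finset.range s, C j)).toReal := by
    have hBU : MeasurableSet (⋃ j ∈ Finset.range s, T^[j] ⁻¹' A) :=
      MeasurableSet.biUnion (Finset.range s).countable_toSet (fun j _ => (hTm.iterate j) hA)
    have hd : μ (W ∩ ⋃ j ∈ Finset.range s, T^[j] ⁻¹' A) + μ (W \ ⋃ j ∈ Finset.range s, T^[j] ⁻¹' A) = μ W :=
      measure_inter_add_diff W hBU
    have he1 : W \ (⋃ j ∈ Finset.range s, T^[j] ⁻¹' A) = avoidWindow T 0 s A ∩ W := by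
      rw [avoidWindow_zero_eq, Set.diff_eq, Set.inter_comm]
    have he2 : W ∩ (⋃ j ∈ Finset.range s, T^[j] ⁻¹' A) = ⋃ j ∈ Finset.range s, C j := by
      ext x; simp only [hCdef, Set.mem_inter_iff, Set.mem_iUnion]; tauto
    rw [he1, he2] at hd
    have := congrArg ENNReal.toReal hd
    rw [ENNReal.toReal_add (measure_ne_top _ _) (measure_ne_top _ _), hWW0] at this
    linarith
  set p := (μ W0).toReal with hp
  set a := (μ A).toReal with ha
  set u := (μ (⋃ j ∈ Finset.range s, C j)).toReal with hu
  set S1 := ∑ j ∈ Finset.range s, (μ (C j)).toReal with hS1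
  set D := ∑ j ∈ Finset.range s, ∑ k ∈ Finset.range j, (μ (C j ∩ C k)).toReal with hD
  set E := ∑ j ∈ Finset.Ico 1 s, (μ (A ∩ T^[j] ⁻¹' A)).toReal with hE
  have hE0 : 0 ≤ E := Finset.sum_nonneg fun _ _ => ENNReal.toReal_nonneg
  have hlow : S1 - D ≤ u := bonferroni_lower μ C hCm s
  have hup : u ≤ S1 := bonferroni_upper μ C s
  have hD0 : 0 ≤ D :=
    Finset.sum_nonneg fun _ _ => Finset.sum_nonneg fun _ _ => ENNReal.toReal_nonneg
  -- D ≤ s * E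
  have hDE : D ≤ (s : ℝ) * E := by
    have hinner : ∀ j ∈ Finset.range s,
        ∑ k ∈ Finset.range j, (μ (C j ∩ C k)).toReal ≤ E := by
      intro j hj
      have hjs := Finset.mem_range.1 hj
      calc ∑ k ∈ Finset.range j, (μ (C j ∩ C k)).toReal
          ≤ ∑ k ∈ Finset.range j, (μ (A ∩ T^[j - k] ⁻¹' A)).toReal :=
            Finset.sum_le_sum (hpair j hj)
        _ = ∑ i ∈ (Finset.range j).image (fun k => j - k), (μ (A ∩ T^[i] ⁻¹' A)).toReal := by
            rw [Finset.sum_image]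
            intro x hx y hy hxy
            rw [Finset.mem_coe, Finset.mem_range] at hx hy
            simp only at hxy
            omega
        _ ≤ E := by
            apply Finset.sum_le_sum_of_subset_of_nonneg
            · intro i hi
              simp only [Finset.mem_image, Finset.mem_range] at hi
              obtain ⟨k, hk, rfl⟩ := hi
              rw [Finset.mem_Ico]
              omega
            · intro i _ _; exact ENNReal.toReal_nonneg
    calc D ≤ ∑ _j ∈ Finset.range s, E := Finset.sum_le_sum hinner
      _ = (s : ℝ) * E := by rw [Finset.sum_const, Finset.card_range, nsmul_eq_mul]
  have hS1f : S1 = ∑ j ∈ Finset.range s, (μ (A ∩ avoidWindow T (s + t - j) m A)).toReal :=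
    Finset.sum_congr rfl hCj
  have key : |(μ (avoidWindow T 0 s A ∩ W)).toReal - p * (1 - (s : ℝ) * a)|
      = |(s : ℝ) * a * p - u| := by
    rw [hsplit]
    have : p - u - p * (1 - (s : ℝ) * a) = (s : ℝ) * a * p - u := by ring
    rw [this]
  rw [key, ← hS1f]
  have htri : |(s : ℝ) * a * p - u| ≤ |(s : ℝ) * a * p - S1| + |S1 - u| := abs_sub_le _ _ _
  have habs : |S1 - u| = S1 - u := abs_of_nonneg (by linarith)
  have hfin : |S1 - u| ≤ 2 * (s : ℝ) * E := by
    rw [habs]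
    have hs0 : (0:ℝ) ≤ (s : ℝ) := Nat.cast_nonneg s
    nlinarith
  linarith
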